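/- Let M be a matroid on a finite set S with |S| = n and rank_M(S) = r. Call A ⊆ S a T-flat of level k if S \ A is a proper flat of the dual matroid M* and |A| - rank_M(A) - 1 = k. Then the number of T-flats of level k is at most C(n, r + k + 1). -/

import Mathlib

open Matroid Set

variable {α : Type*}

/-- The rank of a subset `A` in a matroid `M`:
the maximum cardinality of an independent subset of `A`. -/
noncomputable def mrank (M : Matroid α) (A : Set α) : ℕ :=
  sSup {n | ∃ X ⊆ A, M.Indep X ∧ X.ncard = n}

/-- `F` is a flat of `M` if adding any point of the ground set outside `F`
increases the rank by one. -/
def IsFlat (M : Matroid α) (F : Set α) : Prop :=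
  F ⊆ M.E ∧ ∀ x ∈ M.E, x ∉ F → mrank M (insert x F) = mrank M F + 1

/-- A circuit is a minimal dependent set. -/
def IsCircuit (M : Matroid α) (C : Set α) : Prop :=
  Minimal M.Dep C

/-- The level of a subset `A`: `|A| - rank(A) - 1`. -/
noncomputable def level (M : Matroid α) (A : Set α) : ℤ :=
  (A.ncard : ℤ) - (mrank M A : ℤ) - 1

/-- `A` is a T-flat of `M` if its complement is a proper flat of the dual matroid. -/
def IsTFlat (M : Matroid α) (A : Set α) : Prop :=
  A ⊆ M.E ∧ _root_.IsFlat M✶ (M.E \ A) ∧ M.E \ A ≠ M.E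

lemma mrank_eq_ncard_of_basis {M : Matroid α} {I A : Set α} (hfin : M.E.Finite)
    (hI : M.IsBasis I A) : mrank M A = I.ncard := by
  have hub : ∀ m ∈ {n | ∃ X ⊆ A, M.Indep X ∧ X.ncard = n}, m ≤ I.ncard := by
    rintro m ⟨X, hXA, hXi, rfl⟩
    obtain ⟨J, hJ, hXJ⟩ := hXi.subset_isBasis_of_subset hXA hI.subset_ground
    have h1 : J.encard = I.encard := hJ.restrict_isBase.encard_eq_encard_of_isBase hI.restrict_isBase
    have hJfin : J.Finite := hfin.subset hJ.left_subset_ground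
    calc X.ncard ≤ J.ncard := Set.ncard_le_ncard hXJ hJfin
    _ = I.ncard := by rw [Set.ncard_def, h1, ← Set.ncard_def]
  refine le_antisymm (csSup_le ⟨0, ⟨∅, by simp⟩⟩ hub)
    (le_csSup ⟨I.ncard, hub⟩ ⟨I, hI.subset, hI.indep, rfl⟩)

lemma closure_eq_of_isFlat {M : Matroid α} {F : Set α} (hfin : M.E.Finite)
    (hF : _root_.IsFlat M F) : M.closure F = F := by
  refine subset_antisymm ?_ (M.subset_closure F hF.1)
  intro x hx
  by_contra hxF
  have hxE : x ∈ M.E := M.mem_ground_of_mem_closure hx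
  obtain ⟨I, hI⟩ := M.exists_isBasis F hF.1
  have hIx : M.IsBasis I (insert x F) := by
    rw [isBasis_iff_indep_subset_closure]
    refine ⟨hI.indep, hI.subset.trans (subset_insert _ _), ?_⟩
    rw [insert_subset_iff]
    exact ⟨hI.closure_eq_closure ▸ hx, hI.subset_closure⟩
  have h2 := hF.2 x hxE hxF
  rw [mrank_eq_ncard_of_basis hfin hIx, mrank_eq_ncard_of_basis hfin hI] at h2
  omega

/-- The number of T-flats of level `k` is at most `C(n, r + k + 1)`. -/
theorem card_tflats_le (M : Matroid α) (n r k : ℕ) (hfin : M.E.Finite)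
    (hn : M.E.ncard = n) (hr : mrank M M.E = r) :
    {A : Set α | IsTFlat M A ∧ level M A = (k : ℤ)}.ncard ≤ n.choose (r + k + 1) := by
  classical
  set s := {A : Set α | IsTFlat M A ∧ level M A = (k : ℤ)} with hs_def
  rcases s.eq_empty_or_nonempty with hs | hs
  · rw [hs, Set.ncard_empty]; exact Nat.zero_le _
  have hfin' : M✶.E.Finite := by rwa [dual_ground]
  have key : ∀ A ∈ s, ∃ J, M✶.IsBasis J (M.E \ A) ∧ J.ncard + (r + k + 1) = n := by
    rintro A ⟨⟨hAE, hFlat, hne⟩, hlev⟩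
    obtain ⟨I, hI⟩ := M.exists_isBasis A hAE
    obtain ⟨B, hB, hIB⟩ := hI.exists_isBase
    have hd := hB.compl_inter_isBasis_of_inter_isBasis (by rwa [← hIB])
    refine ⟨(M.E \ B) ∩ (M.E \ A), hd, ?_⟩
    have hBE : B ⊆ M.E := hB.subset_ground
    have hBfin : B.Finite := hfin.subset hBE
    have hAfin : A.Finite := hfin.subset hAE
    have hUE : B ∪ A ⊆ M.E := union_subset hBE hAE
    have hT : (M.E \ B) ∩ (M.E \ A) = M.E \ (B ∪ A) := by
      rw [diff_inter_diff]
    have h1 : (M.E \ (B ∪ A)).ncard + (B ∪ A).ncard = M.E.ncard :=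
      Set.ncard_diff_add_ncard_of_subset hUE hfin
    have h2 : (B ∪ A).ncard + (B ∩ A).ncard = B.ncard + A.ncard :=
      Set.ncard_union_add_ncard_inter B A hBfin hAfin
    have h3 : B.ncard = r := by
      rw [← hr, mrank_eq_ncard_of_basis hfin hB.isBasis_ground]
    have h4 : (B ∩ A).ncard = mrank M A := by
      rw [mrank_eq_ncard_of_basis hfin hI, hIB]
    have hlev' : (A.ncard : ℤ) - (mrank M A : ℤ) - 1 = (k : ℤ) := hlev
    rw [hT]
    omega
  obtain ⟨A₀, hA₀⟩ := hs
  obtain ⟨J₀, _, hJ₀card⟩ := key A₀ hA₀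
  have hrkn : r + k + 1 ≤ n := by omega
  choose! J hJ hJcard using key
  set m := n - (r + k + 1) with hm
  set t : Set (Finset α) := ↑(hfin.toFinset.powersetCard m) with ht_def
  have hmap : ∀ A ∈ s, ∃ (h : (J A).Finite), h.toFinset ∈ t := by
    intro A hA
    have hJE : J A ⊆ M.E := (hJ A hA).left_subset_ground
    have hJfin : (J A).Finite := hfin.subset hJE
    refine ⟨hJfin, ?_⟩
    rw [ht_def, Finset.mem_coe, Finset.mem_powersetCard]
    constructor
    · rw [Set.Finite.toFinset_subset, Set.Finite.coe_toFinset]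
      exact hJE
    · rw [← Set.ncard_eq_toFinset_card (J A) hJfin]
      have := hJcard A hA
      omega
  have hcount : s.ncard ≤ t.ncard := by
    refine Set.ncard_le_ncard_of_injOn
      (fun A => if h : A ∈ s then ((hfin.subset (hJ A h).left_subset_ground).toFinset) else ∅)
      (fun A hA => ?_) (fun A₁ h₁ A₂ h₂ hEq => ?_) (Finset.finite_toSet _)
    · obtain ⟨hf, hmem⟩ := hmap A hA
      simpa [hA] using hmem
    · simp only [dif_pos h₁, dif_pos h₂] at hEq
      rw [Set.Finite.toFinset_inj] at hEq
      have hc₁ : M✶.closure (J A₁) = M.E \ A₁ := by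
        rw [(hJ A₁ h₁).closure_eq_closure,
          closure_eq_of_isFlat hfin' h₁.1.2.1]
      have hc₂ : M✶.closure (J A₂) = M.E \ A₂ := by
        rw [(hJ A₂ h₂).closure_eq_closure,
          closure_eq_of_isFlat hfin' h₂.1.2.1]
      have : M.E \ A₁ = M.E \ A₂ := by rw [← hc₁, ← hc₂, hEq]
      have h₁' : A₁ ⊆ M.E := h₁.1.1
      have h₂' : A₂ ⊆ M.E := h₂.1.1
      rw [← Set.diff_diff_cancel_left h₁', ← Set.diff_diff_cancel_left h₂', this]
  have hcard_t : t.ncard = n.choose (r + k + 1) := by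
    rw [ht_def, Set.ncard_coe_finset, Finset.card_powersetCard,
      ← Set.ncard_eq_toFinset_card M.E hfin, hn, hm, Nat.choose_symm hrkn]
  omega
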